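/- Let 0 ≤ j < K ≤ |A|. Any size-K subset W of A that maximizes u^{K-best} over all size-K subsets of A satisfies u^{(K−j)-best}(W) ≥ ((K−j)/K) · max_{S ⊆ A, |S| = K} u^{(K−j)-best}(S). -/

import Mathlib

open Finset

section Aux


lemma aux_getD_nonneg (l : List ℝ) (h : ∀ a ∈ l, 0 ≤ a) (n : ℕ) : 0 ≤ l.getD n 0 := by
  by_cases hn : n < l.length
  · rw [List.getD_eq_getElem l 0 hn]
    exact h _ (List.getElem_mem hn)
  · rw [List.getD_eq_default l 0 (by omega)]

lemma aux_getD_anti (l : List ℝ) (hs : l.Pairwise (· ≥ ·)) (h0 : ∀ a ∈ l, 0 ≤ a)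
    {a b : ℕ} (hab : a ≤ b) : l.getD b 0 ≤ l.getD a 0 := by
  by_cases hb : b < l.length
  · have ha : a < l.length := lt_of_le_of_lt hab hb
    rw [List.getD_eq_getElem l 0 hb, List.getD_eq_getElem l 0 ha]
    rcases eq_or_lt_of_le hab with rfl | hlt
    · exact le_refl _
    · exact hs.rel_get_of_lt (a := ⟨a, ha⟩) (b := ⟨b, hb⟩) hlt
  · rw [List.getD_eq_default l 0 (by omega)]
    exact aux_getD_nonneg l h0 a

/-- Top-`k` sum is at least `k/K` of whole sum for antitone nonneg sequences. -/
lemma aux_topk (x : ℕ → ℝ) (hx0 : ∀ n, 0 ≤ x n)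
    (hxa : ∀ a b, a ≤ b → x b ≤ x a) (k K : ℕ) (hk : 0 < k) (hkK : k ≤ K) :
    (k : ℝ) / (K : ℝ) * ∑ t ∈ Finset.range K, x t ≤ ∑ t ∈ Finset.range k, x t := by
  have hK : 0 < K := lt_of_lt_of_le hk hkK
  rw [div_mul_eq_mul_div, div_le_iff₀ (by positivity)]
  have hsplit : ∑ t ∈ Finset.range K, x t
      = ∑ t ∈ Finset.range k, x t + ∑ t ∈ Finset.Ico k K, x t := by
    rw [Finset.range_eq_Ico, ← Finset.sum_Ico_consecutive _ (Nat.zero_le k) hkK, Finset.range_eq_Ico]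
  have hB : ∑ t ∈ Finset.Ico k K, (k : ℝ) * x t
      ≤ ∑ t ∈ Finset.Ico k K, ∑ s ∈ Finset.range k, x s := by
    refine Finset.sum_le_sum fun t ht => ?_
    have ht' : k ≤ t := (Finset.mem_Ico.mp ht).1
    calc (k : ℝ) * x t = ∑ s ∈ Finset.range k, x t := by
          rw [Finset.sum_const, Finset.card_range, nsmul_eq_mul]
      _ ≤ ∑ s ∈ Finset.range k, x s :=
          Finset.sum_le_sum fun s hs => hxa s t (le_trans (le_of_lt (Finset.mem_range.mp hs)) ht')
  have hcard : ((Finset.Ico k K).card : ℝ) = (K : ℝ) - (k : ℝ) := by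
    rw [Nat.card_Ico]; push_cast [Nat.cast_sub hkK]; ring
  calc (k : ℝ) * ∑ t ∈ Finset.range K, x t
      = (k : ℝ) * ∑ t ∈ Finset.range k, x t + ∑ t ∈ Finset.Ico k K, (k : ℝ) * x t := by
        rw [hsplit, mul_add, Finset.mul_sum, Finset.mul_sum]
    _ ≤ (k : ℝ) * ∑ t ∈ Finset.range k, x t
        + ((K : ℝ) - (k : ℝ)) * ∑ s ∈ Finset.range k, x s := by
        refine add_le_add_right ?_ _
        calc ∑ t ∈ Finset.Ico k K, (k : ℝ) * x t
            ≤ ∑ t ∈ Finset.Ico k K, ∑ s ∈ Finset.range k, x s := hB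
          _ = ((K : ℝ) - (k : ℝ)) * ∑ s ∈ Finset.range k, x s := by
              rw [Finset.sum_const, nsmul_eq_mul, hcard]
    _ = (∑ t ∈ Finset.range k, x t) * K := by ring

end Aux


lemma aux_ite_sum (x : ℕ → ℝ) {k K : ℕ} (hkK : k ≤ K) :
    ∑ t ∈ Finset.range K, (if t < k then (1:ℝ) else 0) * x t
      = ∑ t ∈ Finset.range k, x t := by
  rw [← Finset.sum_subset (Finset.range_subset_range.2 hkK)
    (fun t _ ht => by rw [if_neg (by simpa using ht), zero_mul])]
  exact Finset.sum_congr rfl fun t ht => by rw [if_pos (Finset.mem_range.mp ht), one_mul]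


/-- The OWA-aggregated total utility of a set `W` of items: for each agent `i` in `N`,
the intrinsic utilities of the items of `W` are sorted in nonincreasing order
`x_0 ≥ x_1 ≥ …` and the agent contributes `∑_{j < K} α j * x_j`
(positions beyond `|W|` contribute `0`).  The OWA vector is `0`-indexed:
`α j` is entry `α_{j+1}` of the paper. -/
noncomputable def owaUtil {I A : Type*} [DecidableEq A]
    (N : Finset I) (u : I → A → ℝ) (K : ℕ) (α : ℕ → ℝ) (W : Finset A) : ℝ :=
  ∑ i ∈ N, ∑ j ∈ Finset.range K,
    α j * (((W.1.map (u i)).sort (· ≤ ·)).reverse.getD j 0)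

/-- Key step for the PTAS for `(K−j)`-best-OWA-Winner: any size-`K` set `W`
maximizing the `K`-best utility is a `((K−j)/K)`-approximate solution for the
`(K−j)`-best OWA, for every `0 ≤ j < K`. -/
theorem stmt_19 {I A : Type*} [DecidableEq A] [Fintype A]
    (N : Finset I) (u : I → A → ℝ) (hu : ∀ i a, 0 ≤ u i a)
    (K j : ℕ) (hj : j < K) (hKm : K ≤ Fintype.card A)
    (W : Finset A) (hWcard : W.card = K)
    (hWopt : ∀ S : Finset A, S.card = K →
      owaUtil N u K (fun _ => (1 : ℝ)) S ≤ owaUtil N u K (fun _ => (1 : ℝ)) W)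
    (hne : ((Finset.univ : Finset A).powersetCard K).Nonempty) :
    (((K - j : ℕ) : ℝ) / (K : ℝ)) *
        ((Finset.univ : Finset A).powersetCard K).sup' hne
          (owaUtil N u K (fun i => if i < K - j then (1 : ℝ) else 0)) ≤
      owaUtil N u K (fun i => if i < K - j then (1 : ℝ) else 0) W := by
  set k := K - j with hkdef
  have hk : 0 < k := by omega
  have hkK : k ≤ K := Nat.sub_le _ _
  have hKpos : 0 < K := lt_of_lt_of_le hk hkK
  have hfrac : (0:ℝ) ≤ (k:ℝ)/(K:ℝ) := by positivity
  -- per-agent list facts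
  have hmem : ∀ (i : I) (S : Finset A),
      ∀ a ∈ ((S.1.map (u i)).sort (· ≤ ·)).reverse, 0 ≤ a := by
    intro i S a ha
    rw [List.mem_reverse, Multiset.mem_sort] at ha
    obtain ⟨b, _, rfl⟩ := Multiset.mem_map.mp ha
    exact hu i b
  have hsorted : ∀ (i : I) (S : Finset A),
      ((S.1.map (u i)).sort (· ≤ ·)).reverse.Pairwise (· ≥ ·) := by
    intro i S
    have h := Multiset.pairwise_sort (S.1.map (u i)) (· ≤ ·)
    exact List.pairwise_reverse.mpr (h.imp fun hab => hab)
  obtain ⟨S, hSmem, hSeq⟩ := Finset.exists_mem_eq_sup' hne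
    (owaUtil N u K (fun i => if i < k then (1 : ℝ) else 0))
  rw [hSeq]
  have hScard : S.card = K := (Finset.mem_powersetCard_univ.mp hSmem)
  -- step 1 : u_if S ≤ u_1 S
  have h1 : owaUtil N u K (fun i => if i < k then (1 : ℝ) else 0) S
      ≤ owaUtil N u K (fun _ => (1:ℝ)) S := by
    refine Finset.sum_le_sum fun i _ => Finset.sum_le_sum fun t _ => ?_
    have h0 := aux_getD_nonneg _ (hmem i S) t
    have : (if t < k then (1:ℝ) else 0) ≤ 1 := by split <;> norm_num
    calc (if t < k then (1:ℝ) else 0) * _ ≤ 1 * _ := mul_le_mul_of_nonneg_right this h0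
      _ = _ := rfl
  -- step 3 : (k/K) * u_1 W ≤ u_if W
  have h3 : (k:ℝ)/(K:ℝ) * owaUtil N u K (fun _ => (1:ℝ)) W
      ≤ owaUtil N u K (fun i => if i < k then (1 : ℝ) else 0) W := by
    unfold owaUtil
    rw [Finset.mul_sum]
    refine Finset.sum_le_sum fun i _ => ?_
    set x : ℕ → ℝ := fun t => (((W.1.map (u i)).sort (· ≤ ·)).reverse.getD t 0) with hx
    have hrw : ∑ t ∈ Finset.range K, (if t < k then (1:ℝ) else 0) * x t
        = ∑ t ∈ Finset.range k, x t := aux_ite_sum x hkK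
    rw [hrw]
    simp only [one_mul]
    exact aux_topk x (fun n => aux_getD_nonneg _ (hmem i W) n)
      (fun a b hab => aux_getD_anti _ (hsorted i W) (hmem i W) hab) k K hk hkK
  calc (k:ℝ)/(K:ℝ) * owaUtil N u K (fun i => if i < k then (1 : ℝ) else 0) S
      ≤ (k:ℝ)/(K:ℝ) * owaUtil N u K (fun _ => (1:ℝ)) S :=
        mul_le_mul_of_nonneg_left h1 hfrac
    _ ≤ (k:ℝ)/(K:ℝ) * owaUtil N u K (fun _ => (1:ℝ)) W :=
        mul_le_mul_of_nonneg_left (hWopt S hScard) hfrac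
    _ ≤ _ := h3
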